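/- If X is an (n+1)-sequentially compact topological space, then X is n-sequentially compact. -/
import Mathlib


/-- `f ↾ [B]^n` converges to `p`. -/
def ConvergesOn {X : Type*} [TopologicalSpace X] (n : ℕ) (B : Set ℕ) (f : Finset ℕ → X)
    (p : X) : Prop :=
  ∀ U ∈ nhds p, ∃ F : Finset ℕ, ∀ s : Finset ℕ, s.card = n → ↑s ⊆ B \ ↑F → f s ∈ U

/-- `X` is `n`-sequentially compact. -/
def NSeqCompact (n : ℕ) (X : Type*) [TopologicalSpace X] : Prop :=
  ∀ f : Finset ℕ → X, ∃ B : Set ℕ, B.Infinite ∧ ∃ p : X, ConvergesOn n B f p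

/-- If `X` is `(n+1)`-sequentially compact then `X` is `n`-sequentially compact. -/
theorem nSeqCompact_of_succ {X : Type*} [TopologicalSpace X] (n : ℕ)
    (h : NSeqCompact (n + 1) X) : NSeqCompact n X := by
  intro f
  -- apply h to the function that erases the maximum element
  obtain ⟨B, hB, p, hp⟩ := h (fun s => f (s.erase (s.max.getD 0)))
  refine ⟨B, hB, p, ?_⟩
  intro U hU
  obtain ⟨F, hF⟩ := hp U hU
  refine ⟨F, ?_⟩
  intro s hcard hsub
  -- pick m ∈ B \ F bigger than all elements of s
  have hinf : (B \ ↑F).Infinite := hB.diff F.finite_toSet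
  obtain ⟨m, hm, hmgt⟩ := hinf.exists_gt (s.sup id)
  have hms : m ∉ s := by
    intro hms
    exact absurd (Finset.le_sup (f := id) hms) (not_le.mpr hmgt)
  have hcard' : (insert m s).card = n + 1 := by
    rw [Finset.card_insert_of_notMem hms, hcard]
  have hmax : (insert m s).max = m := by
    apply le_antisymm
    · apply Finset.max_le
      intro b hb
      rcases Finset.mem_insert.mp hb with rfl | hb
      · exact le_rfl
      · exact WithBot.coe_le_coe.mpr
          (le_of_lt (lt_of_le_of_lt (Finset.le_sup (f := id) hb) hmgt))
    · exact Finset.le_max (Finset.mem_insert_self m s)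
  have key := hF (insert m s) hcard' ?_
  · have hgd : Option.getD (↑m : WithBot ℕ) 0 = m := rfl
    simp only [] at key
    rw [hmax, hgd, Finset.erase_insert hms] at key
    exact key
  · intro x hx
    rcases Finset.mem_insert.mp (by exact_mod_cast hx) with rfl | hx'
    · exact hm
    · exact hsub hx'
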